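/- The minimum size of a dominating set of the m×n king graph is ⌈m/3⌉·⌈n/3⌉. -/

import Mathlib

/-- The `m × n` king graph: vertices are squares of an `m × n` board
(vertex `p` represents board square `(p.1.val + 1, p.2.val + 1)`), with
`p` adjacent to `q` iff `p ≠ q` and `max |x−x'| |y−y'| = 1`. -/
def kingGraph (m n : ℕ) : SimpleGraph (Fin m × Fin n) where
  Adj p q := p ≠ q ∧
    max ((p.1.val : ℤ) - q.1.val).natAbs ((p.2.val : ℤ) - q.2.val).natAbs = 1
  symm := by
    constructor
    intro p q ⟨h1, h2⟩
    refine ⟨h1.symm, ?_⟩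
    rw [show ((q.1.val : ℤ) - p.1.val) = -((p.1.val : ℤ) - q.1.val) by ring,
      show ((q.2.val : ℤ) - p.2.val) = -((p.2.val : ℤ) - q.2.val) by ring,
      Int.natAbs_neg, Int.natAbs_neg]
    exact h2
  loopless := by constructor; intro p ⟨h1, _⟩; exact h1 rfl

instance (m n : ℕ) : DecidableRel (kingGraph m n).Adj :=
  fun p q => decidable_of_iff (p ≠ q ∧
    max ((p.1.val : ℤ) - q.1.val).natAbs ((p.2.val : ℤ) - q.2.val).natAbs = 1) Iff.rfl

/-- `S` is a dominating set: every vertex is in `S` or adjacent to a member of `S`. -/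
def IsDomSet {V : Type*} (G : SimpleGraph V) (S : Finset V) : Prop :=
  ∀ v, v ∈ S ∨ ∃ u ∈ S, G.Adj u v

instance {V : Type*} [Fintype V] [DecidableEq V] (G : SimpleGraph V)
    [DecidableRel G.Adj] : DecidablePred (IsDomSet G) :=
  fun _ => inferInstanceAs (Decidable (∀ _, _ ∨ _))


/-- The minimum size of a dominating set of the `m × n` king graph is
`⌈m/3⌉ * ⌈n/3⌉`. -/
theorem king_domination_number (m n : ℕ) :
    IsLeast {k : ℕ | ∃ S : Finset (Fin m × Fin n),
      IsDomSet (kingGraph m n) S ∧ S.card = k} ((m + 2) / 3 * ((n + 2) / 3)) := by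
  constructor
  · -- membership: the standard construction
    rcases Nat.eq_zero_or_pos m with hm | hm
    · subst hm
      exact ⟨∅, fun v => absurd v.1.2 (by omega), by simp⟩
    rcases Nat.eq_zero_or_pos n with hn | hn
    · subst hn
      exact ⟨∅, fun v => absurd v.2.2 (by omega), by simp⟩
    have hga : ∀ i : Fin ((m+2)/3), min (3*i.val+1) (m-1) < m := fun i => by
      have := i.2; omega
    have hgb : ∀ j : Fin ((n+2)/3), min (3*j.val+1) (n-1) < n := fun j => by
      have := j.2; omega
    refine ⟨Finset.univ.image (fun t : Fin ((m+2)/3) × Fin ((n+2)/3) =>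
      ((⟨_, hga t.1⟩, ⟨_, hgb t.2⟩) : Fin m × Fin n)), ?_, ?_⟩
    · intro v
      have hia : v.1.val / 3 < (m+2)/3 := by have := v.1.2; omega
      have hjb : v.2.val / 3 < (n+2)/3 := by have := v.2.2; omega
      set t : Fin ((m+2)/3) × Fin ((n+2)/3) := (⟨v.1.val/3, hia⟩, ⟨v.2.val/3, hjb⟩) with ht
      have hmem : ((⟨_, hga t.1⟩, ⟨_, hgb t.2⟩) : Fin m × Fin n) ∈
          Finset.univ.image (fun t : Fin ((m+2)/3) × Fin ((n+2)/3) =>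
            ((⟨_, hga t.1⟩, ⟨_, hgb t.2⟩) : Fin m × Fin n)) :=
        Finset.mem_image_of_mem _ (Finset.mem_univ t)
      by_cases heq : ((⟨_, hga t.1⟩, ⟨_, hgb t.2⟩) : Fin m × Fin n) = v
      · left; exact heq ▸ hmem
      · right
        refine ⟨_, hmem, heq, ?_⟩
        have hne : min (3*(v.1.val/3)+1) (m-1) ≠ v.1.val ∨
            min (3*(v.2.val/3)+1) (n-1) ≠ v.2.val := by
          by_contra h
          push_neg at h
          exact heq (Prod.ext (Fin.ext h.1) (Fin.ext h.2))
        have h1 := v.1.2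
        have h2 := v.2.2
        simp only [ht]
        omega
    · rw [Finset.card_image_of_injOn, Finset.card_univ, Fintype.card_prod,
        Fintype.card_fin, Fintype.card_fin]
      intro t _ t' _ h
      rw [Prod.ext_iff] at h
      obtain ⟨h1, h2⟩ := h
      have e1 : min (3*t.1.val+1) (m-1) = min (3*t'.1.val+1) (m-1) := congrArg Fin.val h1
      have e2 : min (3*t.2.val+1) (n-1) = min (3*t'.2.val+1) (n-1) := congrArg Fin.val h2
      have := t.1.2; have := t.2.2; have := t'.1.2; have := t'.2.2
      exact Prod.ext (Fin.ext (by omega)) (Fin.ext (by omega))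
  · -- lower bound
    rintro k ⟨S, hS, rfl⟩
    have hga : ∀ i : Fin ((m+2)/3), 3*i.val < m := fun i => by have := i.2; omega
    have hgb : ∀ j : Fin ((n+2)/3), 3*j.val < n := fun j => by have := j.2; omega
    have hch : ∀ t : Fin ((m+2)/3) × Fin ((n+2)/3), ∃ u ∈ S,
        (u.1.val ≤ 3*t.1.val + 1 ∧ 3*t.1.val ≤ u.1.val + 1) ∧
        (u.2.val ≤ 3*t.2.val + 1 ∧ 3*t.2.val ≤ u.2.val + 1) := by
      intro t
      rcases hS ((⟨_, hga t.1⟩, ⟨_, hgb t.2⟩) : Fin m × Fin n) with h | ⟨u, hu, hadj⟩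
      · exact ⟨_, h, by simp, by simp⟩
      · refine ⟨u, hu, ?_, ?_⟩ <;>
        · have h2 := hadj.2
          simp only [kingGraph] at h2 ⊢
          omega
    choose f hfS hf1 hf2 using hch
    have hle : (Finset.univ : Finset (Fin ((m+2)/3) × Fin ((n+2)/3))).card ≤ S.card := by
      apply Finset.card_le_card_of_injOn f (fun t _ => hfS t)
      intro t _ t' _ h
      have e1 : (f t).1.val = (f t').1.val := by rw [h]
      have e2 : (f t).2.val = (f t').2.val := by rw [h]
      have := hf1 t; have := hf1 t'; have := hf2 t; have := hf2 t'
      exact Prod.ext (Fin.ext (by omega)) (Fin.ext (by omega))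
    simpa using hle
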